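/- Let k ≥ 1, σ ∈ Σ_k and t ∈ ℕ. Then stem(b^t·σ) = σ if and only if d^{j+1} divides c^j·t for every j with 0 ≤ j < k (this expresses that d divides c^j d^{-j} t for all j < k). In that case b^t·σ = σ·b^m, where m ∈ ℕ is determined by m·d^k = c^k·t. -/

import Mathlib

open scoped Classical

namespace BSpaper

/-- The single Baumslag–Solitar relator `a * b^c * (b^d * a)⁻¹` on two generators
(`true` plays the role of `a`, `false` the role of `b`). -/
def rels (c d : ℕ) : Set (FreeGroup Bool) :=
  {FreeGroup.of true * FreeGroup.of false ^ c * (FreeGroup.of false ^ d * FreeGroup.of true)⁻¹}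

/-- The Baumslag–Solitar group `BS(c,d) = ⟨a, b ∣ a b^c = b^d a⟩`. -/
abbrev Grp (c d : ℕ) := PresentedGroup (rels c d)

variable (c d : ℕ)

/-- The generator `a`. -/
def a : Grp c d := PresentedGroup.of true

/-- The generator `b`. -/
def b : Grp c d := PresentedGroup.of false

/-- The submonoid `P` of `BS(c,d)` generated by `a` and `b`. -/
def P : Submonoid (Grp c d) := Submonoid.closure {a c d, b c d}

/-- The word `b^{s₀} a b^{s₁} a ⋯ b^{s_{k-1}} a` associated to a list of digits `s_i < d`. -/
def wordStem : List (Fin d) → Grp c d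
  | [] => 1
  | i :: l => b c d ^ (i : ℕ) * a c d * wordStem l

/-- `Σ_k`: the set of stems of height `k`. -/
def SigmaSet (k : ℕ) : Set (Grp c d) :=
  {g | ∃ l : List (Fin d), l.length = k ∧ wordStem c d l = g}

/-- The data `(l, t)` of a normal-form decomposition `x = (b^{s₀} a ⋯ b^{s_{k-1}} a) * b^t`,
chosen by choice when it exists (it exists, uniquely, for every `x ∈ P`). -/
noncomputable def nf (x : Grp c d) : List (Fin d) × ℕ :=
  if h : ∃ p : List (Fin d) × ℕ, x = wordStem c d p.1 * b c d ^ p.2 then h.choose else ([], 0)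

/-- The stem of `x`, i.e. the stem part of the normal form of `x`. -/
noncomputable def stem (x : Grp c d) : Grp c d := wordStem c d (nf c d x).1

/-- The left-invariant partial order on `BS(c,d)`: `g ≤ h` iff `g⁻¹ * h ∈ P`. -/
def bsLe (g h : Grp c d) : Prop := g⁻¹ * h ∈ P c d

lemma a_mem_P : a c d ∈ P c d := Submonoid.subset_closure (Set.mem_insert _ _)

lemma b_mem_P : b c d ∈ P c d :=
  Submonoid.subset_closure (Set.mem_insert_of_mem _ rfl)

lemma wordStem_mem_P (l : List (Fin d)) : wordStem c d l ∈ P c d := by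
  induction l with
  | nil => exact one_mem _
  | cons i l ih =>
      exact mul_mem (mul_mem (pow_mem (b_mem_P c d) _) (a_mem_P c d)) ih

section Aux
variable (c d : ℕ)


lemma bs_rel : b c d ^ d * a c d = a c d * b c d ^ c := by
  have h : PresentedGroup.mk (rels c d)
      (FreeGroup.of true * FreeGroup.of false ^ c * (FreeGroup.of false ^ d * FreeGroup.of true)⁻¹) = 1 := by
    apply (QuotientGroup.eq_one_iff _).2
    exact Subgroup.subset_normalClosure rfl
  have h2 : a c d * b c d ^ c * (b c d ^ d * a c d)⁻¹ = 1 := by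
    simpa [a, b, PresentedGroup.of, map_mul, map_pow, map_inv] using h
  exact (mul_inv_eq_one.mp h2).symm

lemma b_pow_mul_a (q : ℕ) : b c d ^ (d * q) * a c d = a c d * b c d ^ (c * q) := by
  induction q with
  | zero => simp
  | succ n ih =>
      have : b c d ^ (d * (n+1)) = b c d ^ (d * n) * b c d ^ d := by
        rw [← pow_add]; ring_nf
      rw [this, mul_assoc, bs_rel, ← mul_assoc, ih, mul_assoc, ← pow_add, mul_add, mul_one]

/-- normal-form computation: push `b^t` through a stem -/
def push : ℕ → List (Fin d) → List (Fin d) × ℕ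
  | t, [] => ([], t)
  | t, s :: l =>
      let p := push (c * ((t + (s : ℕ)) / d)) l
      (⟨(t + (s : ℕ)) % d, Nat.mod_lt _ s.pos⟩ :: p.1, p.2)

lemma push_spec (t : ℕ) (l : List (Fin d)) :
    b c d ^ t * wordStem c d l = wordStem c d (push c d t l).1 * b c d ^ (push c d t l).2 := by
  induction l generalizing t with
  | nil => simp [push, wordStem]
  | cons s l ih =>
      show b c d ^ t * (b c d ^ (s:ℕ) * a c d * wordStem c d l) = _
      have hsplit : t + (s:ℕ) = ((t + s) % d) + d * ((t + s) / d) := by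
        rw [Nat.mod_add_div]
      calc b c d ^ t * (b c d ^ (s:ℕ) * a c d * wordStem c d l)
          = b c d ^ (t + (s:ℕ)) * a c d * wordStem c d l := by
            rw [pow_add]; group
        _ = b c d ^ ((t + (s:ℕ)) % d) * (b c d ^ (d * ((t + (s:ℕ)) / d)) * a c d) * wordStem c d l := by
            rw [← mul_assoc, ← pow_add, ← hsplit]
        _ = b c d ^ ((t + (s:ℕ)) % d) * a c d * (b c d ^ (c * ((t + (s:ℕ)) / d)) * wordStem c d l) := by
            rw [b_pow_mul_a]; group
        _ = _ := by
            rw [ih]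
            show _ = wordStem c d (⟨(t + (s : ℕ)) % d, _⟩ :: (push c d _ l).1) * _
            simp only [wordStem]
            rw [show (push c d t (s :: l)).2 = (push c d (c * ((t + (s:ℕ)) / d)) l).2 from rfl]
            group

lemma push_length (t : ℕ) (l : List (Fin d)) : (push c d t l).1.length = l.length := by
  induction l generalizing t with
  | nil => rfl
  | cons s l ih => simp [push, ih]

lemma push_fst_eq_iff (t : ℕ) (l : List (Fin d)) :
    (push c d t l).1 = l ↔ ∀ j < l.length, d ^ (j + 1) ∣ c ^ j * t := by
  induction l generalizing t with
  | nil => simp [push]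
  | cons s l ih =>
      have hd : 0 < d := s.pos
      constructor
      · intro h
        simp only [push, List.cons.injEq] at h
        obtain ⟨h1, h2⟩ := h
        have hmod : (t + (s:ℕ)) % d = (s:ℕ) := by
          have := congrArg Fin.val h1; simpa using this
        have hdvd : d ∣ t := by
          have h0 := Nat.mod_add_div (t + (s:ℕ)) d
          rw [hmod] at h0
          exact ⟨(t + (s:ℕ)) / d, by omega⟩
        obtain ⟨q, rfl⟩ := hdvd
        have hquot : (d * q + (s:ℕ)) / d = q := by
          rw [Nat.mul_add_div hd, Nat.div_eq_of_lt s.isLt, Nat.add_zero]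
        rw [hquot] at h2
        intro j hj
        rcases Nat.eq_zero_or_pos j with rfl | hj0
        · simpa using ⟨q, by ring⟩
        · obtain ⟨j', rfl⟩ := Nat.exists_eq_add_of_lt hj0
          simp only [List.length_cons] at hj
          have := (ih (c * q)).mp h2 j' (by omega)
          -- d^(j'+1) ∣ c^j' * (c*q)  →  d^(j'+2) ∣ c^(j'+1) * (d*q)
          obtain ⟨w, hw⟩ := this
          refine ⟨w, ?_⟩
          have : j' + 1 + 1 = j' + 2 := by omega
          calc c ^ (0 + j' + 1) * (d * q) = d * (c ^ j' * (c * q)) := by ring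
            _ = d * (d ^ (j' + 1) * w) := by rw [hw]
            _ = d ^ (0 + j' + 1 + 1) * w := by ring
      · intro h
        have hdvd : d ∣ t := by simpa using h 0 (by simp)
        obtain ⟨q, rfl⟩ := hdvd
        have hquot : (d * q + (s:ℕ)) / d = q := by
          rw [Nat.mul_add_div hd, Nat.div_eq_of_lt s.isLt, Nat.add_zero]
        have hmod : (d * q + (s:ℕ)) % d = (s:ℕ) := by
          rw [Nat.add_comm, Nat.add_mul_mod_self_left, Nat.mod_eq_of_lt s.isLt]
        simp only [push, List.cons.injEq]
        refine ⟨by ext; simp [hmod], ?_⟩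
        rw [hquot]
        apply (ih (c * q)).mpr
        intro j hj
        have h2 := h (j+1) (by simpa using Nat.succ_lt_succ hj)
        obtain ⟨w, hw⟩ := h2
        refine ⟨w, ?_⟩
        have hcq : c ^ (j + 1) * (d * q) = d * (c ^ j * (c * q)) := by ring
        rw [hcq] at hw
        have : d * (c ^ j * (c*q)) = d * (d ^ (j+1) * w) := by
          rw [hw]; ring
        exact Nat.eq_of_mul_eq_mul_left hd this

lemma part2 (l : List (Fin d)) (t : ℕ)
    (h : ∀ j < l.length, d ^ (j + 1) ∣ c ^ j * t) :
    ∀ m : ℕ, m * d ^ l.length = c ^ l.length * t →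
      b c d ^ t * wordStem c d l = wordStem c d l * b c d ^ m := by
  induction l generalizing t with
  | nil =>
      intro m hm
      have hmt : m = t := by simpa using hm
      subst hmt
      show b c d ^ m * 1 = 1 * b c d ^ m
      rw [mul_one, one_mul]
  | cons s l ih =>
      intro m hm
      have hd : 0 < d := s.pos
      have hdvd : d ∣ t := by simpa using h 0 (by simp)
      obtain ⟨q, rfl⟩ := hdvd
      have hstep : b c d ^ (d * q) * (b c d ^ (s:ℕ) * a c d) =
          b c d ^ (s:ℕ) * a c d * b c d ^ (c * q) := by
        calc b c d ^ (d * q) * (b c d ^ (s:ℕ) * a c d)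
            = b c d ^ (s:ℕ) * (b c d ^ (d * q) * a c d) := by
              rw [← mul_assoc, ← pow_add, Nat.add_comm, pow_add]; group
          _ = _ := by rw [b_pow_mul_a]; group
      have hrec : ∀ j < l.length, d ^ (j + 1) ∣ c ^ j * (c * q) := by
        intro j hj
        have h2 := h (j+1) (by simpa using Nat.succ_lt_succ hj)
        obtain ⟨w, hw⟩ := h2
        refine ⟨w, ?_⟩
        have hcq : c ^ (j + 1) * (d * q) = d * (c ^ j * (c * q)) := by ring
        rw [hcq] at hw
        have : d * (c ^ j * (c*q)) = d * (d ^ (j+1) * w) := by rw [hw]; ring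
        exact Nat.eq_of_mul_eq_mul_left hd this
      have hm' : m * d ^ l.length = c ^ l.length * (c * q) := by
        have : (m * d ^ l.length) * d = (c ^ l.length * (c * q)) * d := by
          calc (m * d ^ l.length) * d = m * d ^ (s :: l).length := by
                simp [List.length_cons, pow_succ]; ring
            _ = c ^ (s :: l).length * (d * q) := hm
            _ = (c ^ l.length * (c * q)) * d := by
                simp [List.length_cons, pow_succ]; ring
        exact Nat.eq_of_mul_eq_mul_right hd this
      show b c d ^ (d*q) * (b c d ^ (s:ℕ) * a c d * wordStem c d l) = 
        b c d ^ (s:ℕ) * a c d * wordStem c d l * b c d ^ m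
      calc b c d ^ (d*q) * (b c d ^ (s:ℕ) * a c d * wordStem c d l)
          = (b c d ^ (d*q) * (b c d ^ (s:ℕ) * a c d)) * wordStem c d l := by group
        _ = (b c d ^ (s:ℕ) * a c d) * (b c d ^ (c * q) * wordStem c d l) := by rw [hstep]; group
        _ = (b c d ^ (s:ℕ) * a c d) * (wordStem c d l * b c d ^ m) := by rw [ih _ hrec m hm']
        _ = _ := by group

open Multiplicative Subgroup

def e (n : ℤ) : Multiplicative ℤ := Multiplicative.ofAdd n

lemma e_injective : Function.Injective e := fun _ _ h => by
  simpa [e] using h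

lemma e_add (m n : ℤ) : e (m + n) = e m * e n := rfl

@[simp] lemma toAdd_e (n : ℤ) : (e n).toAdd = n := rfl

lemma e_pow (n : ℤ) (k : ℕ) : e n ^ k = e (k * n) := by
  rw [← ofAdd_toAdd (e n ^ k), toAdd_pow]
  simp [e, smul_eq_mul]

lemma e_zpow (n : ℤ) (k : ℤ) : e n ^ k = e (k * n) := by
  rw [← ofAdd_toAdd (e n ^ k), toAdd_zpow]
  simp [e, smul_eq_mul]

def Agrp (c : ℕ) : Subgroup (Multiplicative ℤ) := Subgroup.zpowers (e c)

lemma mem_Agrp_iff {c : ℕ} {x : Multiplicative ℤ} : x ∈ Agrp c ↔ (c:ℤ) ∣ x.toAdd := by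
  rw [Agrp, Subgroup.mem_zpowers_iff]
  constructor
  · rintro ⟨k, rfl⟩
    exact ⟨k, by rw [e_zpow, toAdd_e]; ring⟩
  · rintro ⟨k, hk⟩
    refine ⟨k, ?_⟩
    rw [e_zpow]
    apply_fun Multiplicative.toAdd
    rw [toAdd_e, hk]; ring

def phiHom (c d : ℕ) : Agrp c →* Agrp d where
  toFun x := ⟨e (d * (x.1.toAdd / c)), mem_Agrp_iff.mpr ⟨x.1.toAdd / c, by rw [toAdd_e]⟩⟩
  map_one' := by
    ext
    show e ((d:ℤ) * ((1:Multiplicative ℤ).toAdd / c)) = 1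
    simp [e]
  map_mul' x y := by
    have hx : (c:ℤ) ∣ x.1.toAdd := mem_Agrp_iff.mp x.2
    ext
    show e _ = e _ * e _
    rw [← e_add]
    congr 1
    rw [← mul_add]
    congr 1
    show (d:ℤ) * ((x.1 * y.1).toAdd / (c:ℤ)) = _
    rw [toAdd_mul, Int.add_ediv_of_dvd_left hx]

lemma phiHom_comp (c d : ℕ) (hc : (c:ℤ) ≠ 0) (hd : (d:ℤ) ≠ 0) (x : Agrp c) :
    phiHom d c (phiHom c d x) = x := by
  have hx : (c:ℤ) ∣ x.1.toAdd := mem_Agrp_iff.mp x.2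
  ext
  show e ((c:ℤ) * ((e ((d:ℤ) * (x.1.toAdd / c))).toAdd / d)) = x.1
  rw [toAdd_e, Int.mul_ediv_cancel_left _ hd, Int.mul_ediv_cancel' hx]
  exact ofAdd_toAdd x.1

def phi (c d : ℕ) (hc : (c:ℤ) ≠ 0) (hd : (d:ℤ) ≠ 0) : Agrp c ≃* Agrp d :=
  { phiHom c d with
    invFun := phiHom d c
    left_inv := fun x => phiHom_comp c d hc hd x
    right_inv := fun x => phiHom_comp d c hd hc x }

lemma phi_apply' (c d : ℕ) (hc : (c:ℤ) ≠ 0) (hd : (d:ℤ) ≠ 0) (x : Agrp c) :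
    ((phi c d hc hd x : Agrp d) : Multiplicative ℤ) = e ((d:ℤ) * (x.1.toAdd / c)) := rfl

lemma phi_apply_ec (c d : ℕ) (hc : (c:ℤ) ≠ 0) (hd : (d:ℤ) ≠ 0)
    (h : e c ∈ Agrp c) :
    ((phi c d hc hd ⟨e c, h⟩ : Agrp d) : Multiplicative ℤ) = e d := by
  rw [phi_apply']
  show e ((d:ℤ) * ((e c).toAdd / c)) = e d
  rw [toAdd_e, Int.ediv_self hc, mul_one]


section HNN

variable (c d : ℕ) (hc : (c:ℤ) ≠ 0) (hd : (d:ℤ) ≠ 0)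

abbrev HN := HNNExtension (Multiplicative ℤ) (Agrp c) (Agrp d) (phi c d hc hd)

lemma ec_mem : e c ∈ Agrp c := Subgroup.mem_zpowers _

lemma t_mul_of_ec :
    (HNNExtension.t : HN c d hc hd) * HNNExtension.of (e c) = HNNExtension.of (e d) * HNNExtension.t := by
  have := HNNExtension.t_mul_of (φ := phi c d hc hd) ⟨e c, ec_mem c⟩
  rwa [phi_apply_ec c d hc hd] at this

/-- The homomorphism from `BS(c,d)` to the HNN extension. -/
def forth : Grp c d →* HN c d hc hd :=
  PresentedGroup.toGroup (f := fun x => if x then HNNExtension.t else HNNExtension.of (e 1)) (by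
    intro r hr
    rw [rels, Set.mem_singleton_iff] at hr
    subst hr
    simp only [map_mul, map_pow, map_inv, FreeGroup.lift_apply_of]
    rw [mul_inv_eq_one, if_pos trivial, if_neg Bool.false_ne_true]
    have h1 : (HNNExtension.of (e 1) : HN c d hc hd) ^ c = HNNExtension.of (e c) := by
      rw [← map_pow, e_pow]; norm_num
    have h2 : (HNNExtension.of (e 1) : HN c d hc hd) ^ d = HNNExtension.of (e d) := by
      rw [← map_pow, e_pow]; norm_num
    rw [h1, h2, t_mul_of_ec])

lemma forth_a : forth c d hc hd (a c d) = HNNExtension.t := by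
  simp [forth, a, PresentedGroup.toGroup.of]

lemma forth_b_pow (n : ℕ) : forth c d hc hd (b c d ^ n) = HNNExtension.of (e n) := by
  rw [map_pow]
  have : forth c d hc hd (b c d) = HNNExtension.of (e 1) := by
    simp [forth, b, PresentedGroup.toGroup.of]
  rw [this, ← map_pow, e_pow]
  norm_num

/-- entries of the reduced word for `wordStem l * b^n` -/
def ent (l : List (Fin d)) (n : ℕ) : List (ℤˣ × Multiplicative ℤ) :=
  l.map (fun s => ((1:ℤˣ), e (s:ℕ))) ++ [((1:ℤˣ), e n)]

lemma ent_fst_one (l : List (Fin d)) (n : ℕ) : ∀ x ∈ ent d l n, x.1 = 1 := by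
  intro x hx
  simp only [ent, List.mem_append, List.mem_map, List.mem_singleton] at hx
  rcases hx with ⟨s, _, rfl⟩ | rfl <;> rfl

lemma chain_of_fst_one (L : List (ℤˣ × Multiplicative ℤ)) (h : ∀ x ∈ L, x.1 = 1) :
    L.Chain' (fun p q => p.2 ∈ HNNExtension.toSubgroup (Agrp c) (Agrp d) p.1 → p.1 = q.1) := by
  induction L with
  | nil => exact List.isChain_nil
  | cons x L ih =>
      refine List.isChain_cons.2 ⟨?_, ih (fun y hy => h y (List.mem_cons_of_mem _ hy))⟩
      intro y hy _
      rw [h x List.mem_cons_self, h y (List.mem_cons_of_mem _ (List.mem_of_mem_head? hy))]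

/-- The reduced word representing `wordStem l * b^n`. -/
def rWord : List (Fin d) → ℕ → HNNExtension.NormalWord.ReducedWord (Multiplicative ℤ) (Agrp c) (Agrp d)
  | [], n => ⟨e n, [], List.isChain_nil⟩
  | s :: l, n => ⟨e (s:ℕ), ent d l n, chain_of_fst_one c d _ (ent_fst_one d l n)⟩

@[simp] lemma rWord_nil_toList (n : ℕ) : (rWord c d [] n).toList = [] := rfl
@[simp] lemma rWord_cons_toList (s : Fin d) (l : List (Fin d)) (n : ℕ) :
    (rWord c d (s :: l) n).toList = ent d l n := rfl
@[simp] lemma rWord_nil_head (n : ℕ) : (rWord c d [] n).head = e n := rfl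
@[simp] lemma rWord_cons_head (s : Fin d) (l : List (Fin d)) (n : ℕ) :
    (rWord c d (s :: l) n).head = e (s:ℕ) := rfl

lemma rWord_prod_def (l : List (Fin d)) (n : ℕ) :
    (rWord c d l n).prod (phi c d hc hd) = HNNExtension.of (rWord c d l n).head *
      ((rWord c d l n).toList.map
        (fun x => (HNNExtension.t : HN c d hc hd) ^ (x.1 : ℤ) * HNNExtension.of x.2)).prod := rfl

lemma ent_prod (l : List (Fin d)) (n : ℕ) :
    ((ent d l n).map (fun x => (HNNExtension.t : HN c d hc hd) ^ (x.1 : ℤ) * HNNExtension.of x.2)).prod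
      = HNNExtension.t * (rWord c d l n).prod (phi c d hc hd) := by
  induction l with
  | nil =>
      rw [rWord_prod_def]
      simp [ent]
  | cons s l ih =>
      have h0 : ent d (s :: l) n = ((1:ℤˣ), e (s:ℕ)) :: ent d l n := rfl
      rw [h0, List.map_cons, List.prod_cons, rWord_prod_def c d hc hd (s :: l) n,
        rWord_cons_head, rWord_cons_toList, ih]
      simp [mul_assoc]

lemma rWord_prod (l : List (Fin d)) (n : ℕ) :
    forth c d hc hd (wordStem c d l * b c d ^ n) = (rWord c d l n).prod (phi c d hc hd) := by
  induction l with
  | nil =>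
      simp only [wordStem, one_mul, rWord, HNNExtension.NormalWord.ReducedWord.prod,
        List.map_nil, List.prod_nil, mul_one]
      exact forth_b_pow c d hc hd n
  | cons s l ih =>
      have hw : wordStem c d (s :: l) * b c d ^ n =
          b c d ^ (s:ℕ) * (a c d * (wordStem c d l * b c d ^ n)) := by
        simp only [wordStem]; group
      rw [hw, map_mul, map_mul, forth_a, forth_b_pow, ih,
        rWord_prod_def c d hc hd (s :: l) n, rWord_cons_head, rWord_cons_toList, ent_prod]

lemma ent_head_fst (l : List (Fin d)) (n : ℕ) :
    (ent d l n).head?.map Prod.fst = some 1 := by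
  cases l <;> simp [ent]

end HNN

lemma word_inj (c d : ℕ) (hc : (c:ℤ) ≠ 0) (hd : (d:ℤ) ≠ 0) (l : List (Fin d)) :
    ∀ (l' : List (Fin d)) (n n' : ℕ),
    wordStem c d l * b c d ^ n = wordStem c d l' * b c d ^ n' → l = l' ∧ n = n' := by
  induction l with
  | nil =>
      intro l' n n' h
      have hp : (rWord c d ([]:List (Fin d)) n).prod (phi c d hc hd)
          = (rWord c d l' n').prod (phi c d hc hd) := by
        rw [← rWord_prod, ← rWord_prod, h]
      have hfst := (HNNExtension.ReducedWord.map_fst_eq_and_of_prod_eq _ hp).1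
      cases l' with
      | nil =>
          refine ⟨rfl, ?_⟩
          have : HNNExtension.of (e n) = (HNNExtension.of (e n') : HN c d hc hd) := by
            have h1 := rWord_prod c d hc hd ([]:List (Fin d)) n
            have h2 := rWord_prod c d hc hd ([]:List (Fin d)) n'
            rw [rWord_prod_def, rWord_nil_head, rWord_nil_toList] at h1 h2
            simp only [List.map_nil, List.prod_nil, mul_one] at h1 h2
            rw [← h1, ← h2, h]
          have := e_injective (HNNExtension.of_injective (phi c d hc hd) this)
          exact_mod_cast this
      | cons s' l₂' =>
          exfalso
          have := congrArg List.length hfst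
          simp [ent] at this
  | cons s l₂ ih =>
      intro l' n n' h
      cases l' with
      | nil =>
          exfalso
          have hp : (rWord c d (s :: l₂) n).prod (phi c d hc hd)
              = (rWord c d ([]:List (Fin d)) n').prod (phi c d hc hd) := by
            rw [← rWord_prod, ← rWord_prod, h]
          have hfst := (HNNExtension.ReducedWord.map_fst_eq_and_of_prod_eq _ hp).1
          have := congrArg List.length hfst
          simp [ent] at this
      | cons s' l₂' =>
          have hp : (rWord c d (s :: l₂) n).prod (phi c d hc hd)
              = (rWord c d (s' :: l₂') n').prod (phi c d hc hd) := by
            rw [← rWord_prod, ← rWord_prod, h]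
          have hhead := (HNNExtension.ReducedWord.map_fst_eq_and_of_prod_eq _ hp).2
          have h1 : (rWord c d (s :: l₂) n).toList.head?.map Prod.fst = some 1 :=
            ent_head_fst d l₂ n
          have hmem := hhead 1 (by rw [h1]; rfl)
          have hB : (e (s:ℕ))⁻¹ * e (s':ℕ) ∈ Agrp d := by
            simpa using hmem
          have hdvd : (d:ℤ) ∣ ((s':ℕ) : ℤ) - ((s:ℕ) : ℤ) := by
            have := mem_Agrp_iff.mp hB
            simpa [e, sub_eq_neg_add] using this
          have hss : s = s' := by
            have habs : |((s':ℕ) : ℤ) - ((s:ℕ) : ℤ)| < (d:ℤ) := by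
              have h1 := s.isLt
              have h2 := s'.isLt
              rw [abs_lt]
              constructor <;> [skip; skip] <;> push_cast <;> omega
            have := Int.eq_zero_of_abs_lt_dvd hdvd habs
            have : ((s':ℕ) : ℤ) = ((s:ℕ) : ℤ) := by omega
            have : (s':ℕ) = (s:ℕ) := by exact_mod_cast this
            exact (Fin.ext this).symm
          subst hss
          -- cancel and recurse
          have hcan : wordStem c d l₂ * b c d ^ n = wordStem c d l₂' * b c d ^ n' := by
            have hw : ∀ (L : List (Fin d)) (m : ℕ), wordStem c d (s :: L) * b c d ^ m =
                (b c d ^ (s:ℕ) * a c d) * (wordStem c d L * b c d ^ m) := by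
              intro L m; simp only [wordStem]; group
            rw [hw, hw] at h
            exact mul_left_cancel h
          obtain ⟨h1, h2⟩ := ih l₂' n n' hcan
          exact ⟨by rw [h1], h2⟩


end Aux

lemma stem_eq_push (c d : ℕ) (hc : 0 < c) (hd : 0 < d) (t : ℕ) (l : List (Fin d)) :
    stem c d (b c d ^ t * wordStem c d l) = wordStem c d (push c d t l).1 := by
  have hc' : (c:ℤ) ≠ 0 := by exact_mod_cast hc.ne'
  have hd' : (d:ℤ) ≠ 0 := by exact_mod_cast hd.ne'
  have hex : ∃ p : List (Fin d) × ℕ,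
      b c d ^ t * wordStem c d l = wordStem c d p.1 * b c d ^ p.2 :=
    ⟨push c d t l, push_spec c d t l⟩
  unfold stem nf
  rw [dif_pos hex]
  have hspec := hex.choose_spec
  have hkey := word_inj c d hc' hd' hex.choose.1 (push c d t l).1 hex.choose.2
    (push c d t l).2 (by rw [← hspec, push_spec])
  rw [hkey.1]

theorem statement11 (c d : ℕ) (hc : 0 < c) (hd : 0 < d)
    (k : ℕ) (hk : 1 ≤ k) (l : List (Fin d)) (hl : l.length = k) (t : ℕ) :
    (stem c d (b c d ^ t * wordStem c d l) = wordStem c d l ↔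
        ∀ j < k, d ^ (j + 1) ∣ c ^ j * t) ∧
      ((∀ j < k, d ^ (j + 1) ∣ c ^ j * t) →
        ∀ m : ℕ, m * d ^ k = c ^ k * t →
          b c d ^ t * wordStem c d l = wordStem c d l * b c d ^ m) := by
  subst hl
  have hc' : (c:ℤ) ≠ 0 := by exact_mod_cast hc.ne'
  have hd' : (d:ℤ) ≠ 0 := by exact_mod_cast hd.ne'
  constructor
  · rw [stem_eq_push c d hc hd t l]
    constructor
    · intro h
      have hpl : (push c d t l).1 = l := by
        have hkey := word_inj c d hc' hd' (push c d t l).1 l 0 0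
          (by simpa using h)
        exact hkey.1
      exact (push_fst_eq_iff c d t l).mp hpl
    · intro h
      rw [(push_fst_eq_iff c d t l).mpr h]
  · intro h m hm
    exact part2 c d l t h m hm

end BSpaper
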